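/- The function σ̃(κ) = c(κ)/κ, where c(κ) = (∫_0^π cosθ e^{κcosθ} sin^{n-2}θ dθ)/(∫_0^π e^{κcosθ} sin^{n-2}θ dθ), extends continuously to κ = 0 with value 1/n, is strictly decreasing on (0,∞), and tends to 0 as κ → ∞. Consequently, for σ ≥ 1/n the equation c(κ) = σκ has the unique nonnegative solution κ = 0, while for 0 < σ < 1/n it has exactly one additional positive solution. -/

import Mathlib

open Real intervalIntegral Filter


noncomputable def Efn (j : ℕ) (κ θ : ℝ) : ℝ := Real.exp (κ * Real.cos θ) * Real.sin θ ^ j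

@[fun_prop]
lemma Efn_cont (j : ℕ) (κ : ℝ) : Continuous (Efn j κ) := by unfold Efn; fun_prop

noncomputable def Jfn (j : ℕ) (κ : ℝ) : ℝ := ∫ θ in (0:ℝ)..π, Efn j κ θ

lemma Efn_nonneg (j : ℕ) (κ : ℝ) {θ : ℝ} (h : 0 ≤ Real.sin θ) : 0 ≤ Efn j κ θ :=
  mul_nonneg (Real.exp_nonneg _) (pow_nonneg h j)

lemma Jpart_pos (j : ℕ) (κ : ℝ) {a b : ℝ} (ha : 0 ≤ a) (hab : a < b) (hb : b ≤ π) :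
    0 < ∫ θ in a..b, Efn j κ θ := by
  apply intervalIntegral_pos_of_pos_on ((Efn_cont j κ).intervalIntegrable a b) ?_ hab
  intro x hx
  exact mul_pos (Real.exp_pos _)
    (pow_pos (Real.sin_pos_of_pos_of_lt_pi (lt_of_le_of_lt ha hx.1) (lt_of_lt_of_le hx.2 hb)) j)

lemma Jfn_pos (j : ℕ) (κ : ℝ) : 0 < Jfn j κ := Jpart_pos j κ le_rfl Real.pi_pos le_rfl

lemma Jfn_cont (j : ℕ) : Continuous (Jfn j) := by
  apply intervalIntegral.continuous_parametric_intervalIntegral_of_continuous' (μ := MeasureTheory.volume)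
    (f := fun κ θ => Efn j κ θ)
  unfold Efn Function.uncurry; fun_prop

lemma Jfn_even (j : ℕ) (κ : ℝ) : Jfn j (-κ) = Jfn j κ := by
  have h := intervalIntegral.integral_comp_sub_left (a := (0:ℝ)) (b := π) (Efn j κ) π
  simp only [sub_self, sub_zero] at h
  have h2 : ∀ x : ℝ, Efn j κ (π - x) = Efn j (-κ) x := by
    intro x
    unfold Efn
    rw [Real.cos_pi_sub, Real.sin_pi_sub]
    ring_nf
  unfold Jfn
  rw [← h]
  simp only [h2]

lemma Bint (j : ℕ) (κ : ℝ) :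
    ∫ θ in (0:ℝ)..π, Real.cos θ * Real.exp (κ * Real.cos θ) * Real.sin θ ^ j
      = κ / ((j : ℝ) + 1) * Jfn (j + 2) κ := by
  have hj : ((j : ℝ) + 1) ≠ 0 := by positivity
  set F : ℝ → ℝ := fun θ => Real.exp (κ * Real.cos θ) * Real.sin θ ^ (j + 1) / ((j : ℝ) + 1)
  have hder : ∀ x ∈ Set.uIcc (0:ℝ) π, HasDerivAt F
      (Real.cos x * Real.exp (κ * Real.cos x) * Real.sin x ^ j
        - κ / ((j : ℝ) + 1) * Efn (j + 2) κ x) x := by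
    intro x _
    have h1 : HasDerivAt (fun θ : ℝ => Real.exp (κ * Real.cos θ))
        (Real.exp (κ * Real.cos x) * (κ * (-Real.sin x))) x :=
      ((Real.hasDerivAt_cos x).const_mul κ).exp
    have h2 : HasDerivAt (fun θ : ℝ => Real.sin θ ^ (j + 1))
        (((j : ℕ) + 1) * Real.sin x ^ j * Real.cos x) x := by
      simpa using (Real.hasDerivAt_sin x).fun_pow (j + 1)
    have h3 := (h1.fun_mul h2).div_const ((j : ℝ) + 1)
    refine h3.congr_deriv ?_
    unfold Efn
    have : Real.sin x ^ (j + 2) = Real.sin x ^ j * Real.sin x ^ 2 := by ring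
    field_simp
    ring
  have hint : IntervalIntegrable (fun x => Real.cos x * Real.exp (κ * Real.cos x) * Real.sin x ^ j
        - κ / ((j : ℝ) + 1) * Efn (j + 2) κ x) MeasureTheory.volume 0 π := by
    apply Continuous.intervalIntegrable
    unfold Efn; fun_prop
  have := intervalIntegral.integral_eq_sub_of_hasDerivAt hder hint
  rw [intervalIntegral.integral_sub (by apply Continuous.intervalIntegrable; fun_prop)
      (by apply Continuous.intervalIntegrable; unfold Efn; fun_prop)] at this
  rw [intervalIntegral.integral_const_mul] at this
  have hF : F π - F 0 = 0 := by
    simp [F, Real.sin_pi]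
  rw [hF] at this
  have : (∫ θ in (0:ℝ)..π, Real.cos θ * Real.exp (κ * Real.cos θ) * Real.sin θ ^ j)
      = κ / ((j : ℝ) + 1) * ∫ θ in (0:ℝ)..π, Efn (j+2) κ θ := by linarith
  rw [this]; rfl

lemma Jfn_zero_rec (j : ℕ) : Jfn (j + 2) 0 = ((j:ℝ) + 1) / ((j:ℝ) + 2) * Jfn j 0 := by
  have h : ∀ (k : ℕ), Jfn k 0 = ∫ θ in (0:ℝ)..π, Real.sin θ ^ k := by
    intro k; unfold Jfn Efn; simp
  rw [h, h, integral_sin_pow j]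
  simp [Real.sin_pi]

lemma cosh_lt_cosh_of_sq {x y : ℝ} (h : x^2 < y^2) : Real.cosh x < Real.cosh y := by
  rw [Real.cosh_lt_cosh, ← Real.sqrt_sq_eq_abs, ← Real.sqrt_sq_eq_abs]
  exact Real.sqrt_lt_sqrt (sq_nonneg _) h

lemma bracket_nonneg {κ1 κ2 : ℝ} (h1 : 0 ≤ κ1) (h12 : κ1 < κ2) (u v : ℝ) :
    0 ≤ (v^2 - u^2) * (Real.exp (κ1*u + κ2*v) + Real.exp (-(κ1*u + κ2*v))
      - Real.exp (κ2*u + κ1*v) - Real.exp (-(κ2*u + κ1*v))) := by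
  have key : Real.exp (κ1*u + κ2*v) + Real.exp (-(κ1*u + κ2*v))
      - Real.exp (κ2*u + κ1*v) - Real.exp (-(κ2*u + κ1*v))
      = 2*(Real.cosh (κ1*u + κ2*v) - Real.cosh (κ2*u + κ1*v)) := by
    rw [Real.cosh_eq, Real.cosh_eq]; ring
  rw [key]
  rcases lt_trichotomy (u^2) (v^2) with h | h | h
  · have hk : (0:ℝ) < κ2^2 - κ1^2 := by nlinarith
    have := cosh_lt_cosh_of_sq (x := κ2*u + κ1*v) (y := κ1*u + κ2*v)
      (by nlinarith [mul_pos hk (by linarith : (0:ℝ) < v^2 - u^2)])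
    nlinarith
  · have hz : v^2 - u^2 = 0 := by linarith
    rw [hz, zero_mul]
  · have hk : (0:ℝ) < κ2^2 - κ1^2 := by nlinarith
    have := cosh_lt_cosh_of_sq (x := κ1*u + κ2*v) (y := κ2*u + κ1*v)
      (by nlinarith [mul_pos hk (by linarith : (0:ℝ) < u^2 - v^2)])
    nlinarith

lemma bracket_pos {κ1 κ2 : ℝ} (h1 : 0 ≤ κ1) (h12 : κ1 < κ2) {u v : ℝ} (huv : v^2 < u^2) :
    0 < (v^2 - u^2) * (Real.exp (κ1*u + κ2*v) + Real.exp (-(κ1*u + κ2*v))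
      - Real.exp (κ2*u + κ1*v) - Real.exp (-(κ2*u + κ1*v))) := by
  have key : Real.exp (κ1*u + κ2*v) + Real.exp (-(κ1*u + κ2*v))
      - Real.exp (κ2*u + κ1*v) - Real.exp (-(κ2*u + κ1*v))
      = 2*(Real.cosh (κ1*u + κ2*v) - Real.cosh (κ2*u + κ1*v)) := by
    rw [Real.cosh_eq, Real.cosh_eq]; ring
  rw [key]
  have hk : (0:ℝ) < κ2^2 - κ1^2 := by nlinarith
  have := cosh_lt_cosh_of_sq (x := κ1*u + κ2*v) (y := κ2*u + κ1*v)
    (by nlinarith [mul_pos hk (by linarith : (0:ℝ) < u^2 - v^2)])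
  nlinarith

noncomputable def Pker (j : ℕ) (κ1 κ2 θ φ : ℝ) : ℝ :=
  Efn (j+2) κ1 θ * Efn j κ2 φ + Efn (j+2) (-κ1) θ * Efn j (-κ2) φ
  - Efn (j+2) κ2 θ * Efn j κ1 φ - Efn (j+2) (-κ2) θ * Efn j (-κ1) φ
  - Efn j κ1 θ * Efn (j+2) κ2 φ - Efn j (-κ1) θ * Efn (j+2) (-κ2) φ
  + Efn j κ2 θ * Efn (j+2) κ1 φ + Efn j (-κ2) θ * Efn (j+2) (-κ1) φ

lemma Pker_fact (j : ℕ) (κ1 κ2 θ φ : ℝ) :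
    Pker j κ1 κ2 θ φ = (Real.sin θ ^ j * Real.sin φ ^ j) *
      ((Real.cos φ ^ 2 - Real.cos θ ^ 2) *
      (Real.exp (κ1*Real.cos θ + κ2*Real.cos φ) + Real.exp (-(κ1*Real.cos θ + κ2*Real.cos φ))
      - Real.exp (κ2*Real.cos θ + κ1*Real.cos φ) - Real.exp (-(κ2*Real.cos θ + κ1*Real.cos φ)))) := by
  simp only [Pker, Efn, pow_add, Real.sin_sq, neg_add, Real.exp_add, neg_mul]
  ring

lemma Pker_nonneg (j : ℕ) {κ1 κ2 : ℝ} (h1 : 0 ≤ κ1) (h12 : κ1 < κ2) {θ φ : ℝ}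
    (hθ : 0 ≤ Real.sin θ) (hφ : 0 ≤ Real.sin φ) : 0 ≤ Pker j κ1 κ2 θ φ := by
  rw [Pker_fact]
  exact mul_nonneg (mul_nonneg (pow_nonneg hθ j) (pow_nonneg hφ j))
    (bracket_nonneg h1 h12 _ _)

lemma Pker_pos (j : ℕ) {κ1 κ2 : ℝ} (h1 : 0 ≤ κ1) (h12 : κ1 < κ2) {θ φ : ℝ}
    (hθ : 0 < Real.sin θ) (hφ : 0 < Real.sin φ)
    (hc : Real.cos φ ^ 2 < Real.cos θ ^ 2) : 0 < Pker j κ1 κ2 θ φ := by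
  rw [Pker_fact]
  exact mul_pos (mul_pos (pow_pos hθ j) (pow_pos hφ j)) (bracket_pos h1 h12 hc)

lemma int8l (j1 j2 j3 j4 j5 j6 j7 j8 : ℕ) (μ1 μ2 μ3 μ4 μ5 μ6 μ7 μ8 c1 c2 c3 c4 c5 c6 c7 c8 : ℝ) :
    (∫ φ in (0:ℝ)..π, (c1 * Efn j1 μ1 φ + c2 * Efn j2 μ2 φ - c3 * Efn j3 μ3 φ - c4 * Efn j4 μ4 φ
      - c5 * Efn j5 μ5 φ - c6 * Efn j6 μ6 φ + c7 * Efn j7 μ7 φ + c8 * Efn j8 μ8 φ))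
    = c1 * Jfn j1 μ1 + c2 * Jfn j2 μ2 - c3 * Jfn j3 μ3 - c4 * Jfn j4 μ4
      - c5 * Jfn j5 μ5 - c6 * Jfn j6 μ6 + c7 * Jfn j7 μ7 + c8 * Jfn j8 μ8 := by
  have I : ∀ (jj : ℕ) (μμ cc : ℝ),
      IntervalIntegrable (fun φ => cc * Efn jj μμ φ) MeasureTheory.volume 0 π :=
    fun jj μμ cc => (continuous_const.mul (Efn_cont jj μμ)).intervalIntegrable 0 π
  have I1 := I j1 μ1 c1; have I2 := I j2 μ2 c2; have I3 := I j3 μ3 c3; have I4 := I j4 μ4 c4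
  have I5 := I j5 μ5 c5; have I6 := I j6 μ6 c6; have I7 := I j7 μ7 c7; have I8 := I j8 μ8 c8
  rw [intervalIntegral.integral_add ((((((I1.add I2).sub I3).sub I4).sub I5).sub I6).add I7) I8,
      intervalIntegral.integral_add (((((I1.add I2).sub I3).sub I4).sub I5).sub I6) I7,
      intervalIntegral.integral_sub ((((I1.add I2).sub I3).sub I4).sub I5) I6,
      intervalIntegral.integral_sub (((I1.add I2).sub I3).sub I4) I5,
      intervalIntegral.integral_sub ((I1.add I2).sub I3) I4,
      intervalIntegral.integral_sub (I1.add I2) I3,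
      intervalIntegral.integral_add I1 I2]
  simp only [intervalIntegral.integral_const_mul]
  rfl

lemma int8r (j1 j2 j3 j4 j5 j6 j7 j8 : ℕ) (μ1 μ2 μ3 μ4 μ5 μ6 μ7 μ8 c1 c2 c3 c4 c5 c6 c7 c8 : ℝ) :
    (∫ θ in (0:ℝ)..π, (Efn j1 μ1 θ * c1 + Efn j2 μ2 θ * c2 - Efn j3 μ3 θ * c3 - Efn j4 μ4 θ * c4
      - Efn j5 μ5 θ * c5 - Efn j6 μ6 θ * c6 + Efn j7 μ7 θ * c7 + Efn j8 μ8 θ * c8))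
    = Jfn j1 μ1 * c1 + Jfn j2 μ2 * c2 - Jfn j3 μ3 * c3 - Jfn j4 μ4 * c4
      - Jfn j5 μ5 * c5 - Jfn j6 μ6 * c6 + Jfn j7 μ7 * c7 + Jfn j8 μ8 * c8 := by
  have I : ∀ (jj : ℕ) (μμ cc : ℝ),
      IntervalIntegrable (fun θ => Efn jj μμ θ * cc) MeasureTheory.volume 0 π :=
    fun jj μμ cc => ((Efn_cont jj μμ).mul continuous_const).intervalIntegrable 0 π
  have I1 := I j1 μ1 c1; have I2 := I j2 μ2 c2; have I3 := I j3 μ3 c3; have I4 := I j4 μ4 c4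
  have I5 := I j5 μ5 c5; have I6 := I j6 μ6 c6; have I7 := I j7 μ7 c7; have I8 := I j8 μ8 c8
  rw [intervalIntegral.integral_add ((((((I1.add I2).sub I3).sub I4).sub I5).sub I6).add I7) I8,
      intervalIntegral.integral_add (((((I1.add I2).sub I3).sub I4).sub I5).sub I6) I7,
      intervalIntegral.integral_sub ((((I1.add I2).sub I3).sub I4).sub I5) I6,
      intervalIntegral.integral_sub (((I1.add I2).sub I3).sub I4) I5,
      intervalIntegral.integral_sub ((I1.add I2).sub I3) I4,
      intervalIntegral.integral_sub (I1.add I2) I3,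
      intervalIntegral.integral_add I1 I2]
  simp only [intervalIntegral.integral_mul_const]
  rfl

lemma inner_eq (j : ℕ) (κ1 κ2 θ : ℝ) :
    (∫ φ in (0:ℝ)..π, Pker j κ1 κ2 θ φ)
    = Efn (j+2) κ1 θ * Jfn j κ2 + Efn (j+2) (-κ1) θ * Jfn j (-κ2)
      - Efn (j+2) κ2 θ * Jfn j κ1 - Efn (j+2) (-κ2) θ * Jfn j (-κ1)
      - Efn j κ1 θ * Jfn (j+2) κ2 - Efn j (-κ1) θ * Jfn (j+2) (-κ2)
      + Efn j κ2 θ * Jfn (j+2) κ1 + Efn j (-κ2) θ * Jfn (j+2) (-κ1) := by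
  unfold Pker
  exact int8l j j j j (j+2) (j+2) (j+2) (j+2) κ2 (-κ2) κ1 (-κ1) κ2 (-κ2) κ1 (-κ1)
    (Efn (j+2) κ1 θ) (Efn (j+2) (-κ1) θ) (Efn (j+2) κ2 θ) (Efn (j+2) (-κ2) θ)
    (Efn j κ1 θ) (Efn j (-κ1) θ) (Efn j κ2 θ) (Efn j (-κ2) θ)

lemma Jmono (j : ℕ) {κ1 κ2 : ℝ} (h1 : 0 ≤ κ1) (h12 : κ1 < κ2) :
    Jfn (j+2) κ2 * Jfn j κ1 < Jfn (j+2) κ1 * Jfn j κ2 := by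
  have pi_pos := Real.pi_pos
  set inner : ℝ → ℝ := fun θ =>
    Efn (j+2) κ1 θ * Jfn j κ2 + Efn (j+2) (-κ1) θ * Jfn j (-κ2)
    - Efn (j+2) κ2 θ * Jfn j κ1 - Efn (j+2) (-κ2) θ * Jfn j (-κ1)
    - Efn j κ1 θ * Jfn (j+2) κ2 - Efn j (-κ1) θ * Jfn (j+2) (-κ2)
    + Efn j κ2 θ * Jfn (j+2) κ1 + Efn j (-κ2) θ * Jfn (j+2) (-κ1) with hinner
  have hI : ∀ θ : ℝ, inner θ = ∫ φ in (0:ℝ)..π, Pker j κ1 κ2 θ φ :=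
    fun θ => (inner_eq j κ1 κ2 θ).symm
  have houter : (∫ θ in (0:ℝ)..π, inner θ)
      = 4 * (Jfn (j+2) κ1 * Jfn j κ2 - Jfn (j+2) κ2 * Jfn j κ1) := by
    rw [show (fun θ => inner θ) = fun θ =>
      Efn (j+2) κ1 θ * Jfn j κ2 + Efn (j+2) (-κ1) θ * Jfn j (-κ2)
      - Efn (j+2) κ2 θ * Jfn j κ1 - Efn (j+2) (-κ2) θ * Jfn j (-κ1)
      - Efn j κ1 θ * Jfn (j+2) κ2 - Efn j (-κ1) θ * Jfn (j+2) (-κ2)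
      + Efn j κ2 θ * Jfn (j+2) κ1 + Efn j (-κ2) θ * Jfn (j+2) (-κ1) from rfl]
    rw [int8r (j+2) (j+2) (j+2) (j+2) j j j j κ1 (-κ1) κ2 (-κ2) κ1 (-κ1) κ2 (-κ2)
      (Jfn j κ2) (Jfn j (-κ2)) (Jfn j κ1) (Jfn j (-κ1))
      (Jfn (j+2) κ2) (Jfn (j+2) (-κ2)) (Jfn (j+2) κ1) (Jfn (j+2) (-κ1))]
    simp only [Jfn_even]
    ring
  have hPcont : ∀ θ : ℝ, Continuous (fun φ => Pker j κ1 κ2 θ φ) := by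
    intro θ; unfold Pker Efn; fun_prop
  have hnonneg : ∀ θ ∈ Set.Icc (0:ℝ) π, 0 ≤ inner θ := by
    intro θ hθ
    rw [hI θ]
    refine intervalIntegral.integral_nonneg Real.pi_pos.le (fun φ hφ => ?_)
    exact Pker_nonneg j h1 h12 (Real.sin_nonneg_of_nonneg_of_le_pi hθ.1 hθ.2)
      (Real.sin_nonneg_of_nonneg_of_le_pi hφ.1 hφ.2)
  have hpos : ∀ θ ∈ Set.Ioo (0:ℝ) (π/2), 0 < inner θ := by
    intro θ hθ
    rw [hI θ]
    have hθπ : θ < π - θ := by linarith [hθ.2]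
    have hII : ∀ a b : ℝ, IntervalIntegrable (fun φ => Pker j κ1 κ2 θ φ) MeasureTheory.volume a b :=
      fun a b => (hPcont θ).intervalIntegrable a b
    rw [← intervalIntegral.integral_add_adjacent_intervals (hII 0 θ) (hII θ π),
        ← intervalIntegral.integral_add_adjacent_intervals (hII θ (π - θ)) (hII (π - θ) π)]
    have hsθ : 0 < Real.sin θ := Real.sin_pos_of_pos_of_lt_pi hθ.1 (by linarith [hθ.2])
    have A : 0 ≤ ∫ φ in (0:ℝ)..θ, Pker j κ1 κ2 θ φ := by
      refine intervalIntegral.integral_nonneg hθ.1.le (fun φ hφ => ?_)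
      exact Pker_nonneg j h1 h12 hsθ.le
        (Real.sin_nonneg_of_nonneg_of_le_pi hφ.1 (by linarith [hφ.2, hθ.2]))
    have B : 0 < ∫ φ in θ..(π - θ), Pker j κ1 κ2 θ φ := by
      refine intervalIntegral_pos_of_pos_on (hII _ _) (fun φ hφ => ?_) hθπ
      have hφ1 : 0 < φ := lt_trans hθ.1 hφ.1
      have hφ2 : φ < π := by linarith [hφ.2, hθ.1]
      have hc1 : Real.cos φ < Real.cos θ :=
        Real.cos_lt_cos_of_nonneg_of_le_pi hθ.1.le hφ2.le hφ.1
      have hc2 : Real.cos (π - θ) < Real.cos φ :=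
        Real.cos_lt_cos_of_nonneg_of_le_pi hφ1.le (by linarith [hθ.1]) hφ.2
      rw [Real.cos_pi_sub] at hc2
      exact Pker_pos j h1 h12 hsθ (Real.sin_pos_of_pos_of_lt_pi hφ1 hφ2) (by nlinarith)
    have C : 0 ≤ ∫ φ in (π - θ)..π, Pker j κ1 κ2 θ φ := by
      refine intervalIntegral.integral_nonneg (by linarith [hθ.1]) (fun φ hφ => ?_)
      exact Pker_nonneg j h1 h12 hsθ.le
        (Real.sin_nonneg_of_nonneg_of_le_pi (by linarith [hφ.1, hθ.2]) hφ.2)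
    linarith
  have hcont : Continuous inner := by
    rw [hinner]; unfold Efn; fun_prop
  have split := intervalIntegral.integral_add_adjacent_intervals
    (μ := MeasureTheory.volume) (a := (0:ℝ)) (b := π/2) (c := π) (f := inner)
    (hcont.intervalIntegrable _ _) (hcont.intervalIntegrable _ _)
  have P1 : 0 < ∫ θ in (0:ℝ)..(π/2), inner θ :=
    intervalIntegral_pos_of_pos_on (hcont.intervalIntegrable _ _) hpos (by linarith)
  have P2 : 0 ≤ ∫ θ in (π/2:ℝ)..π, inner θ :=
    intervalIntegral.integral_nonneg (by linarith)
      (fun θ hθ => hnonneg θ ⟨by linarith [hθ.1], hθ.2⟩)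
  have hT : 0 < ∫ θ in (0:ℝ)..π, inner θ := by rw [← split]; linarith
  rw [houter] at hT
  linarith
lemma Jtop (j : ℕ) : Tendsto (fun κ => Jfn (j+2) κ / Jfn j κ) atTop (nhds 0) := by
  rw [tendsto_order]
  constructor
  · intro a ha
    filter_upwards with κ
    exact lt_of_lt_of_le ha (div_pos (Jfn_pos _ _) (Jfn_pos _ _)).le
  · intro ε hε
    have pi_pos := Real.pi_pos
    set δ : ℝ := min (ε/4) (1/2) with hδdef
    have hδpos : 0 < δ := lt_min (by linarith) (by norm_num)
    have hδhalf : δ ≤ 1/2 := min_le_right _ _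
    have hδeps : δ ≤ ε/4 := min_le_left _ _
    set θ0 := Real.arccos (1 - δ) with hθ0def
    set θ1 := Real.arccos (1 - δ/2) with hθ1def
    have hθ0pos : 0 < θ0 := Real.arccos_pos.2 (by linarith)
    have hθ0pi : θ0 ≤ π := Real.arccos_le_pi _
    have hθ0half : θ0 ≤ π/2 := Real.arccos_le_pi_div_two.2 (by linarith)
    have hcθ0 : Real.cos θ0 = 1 - δ := Real.cos_arccos (by linarith) (by linarith)
    have hθ1pos : 0 < θ1 := Real.arccos_pos.2 (by linarith)
    have hθ1pi : θ1 ≤ π := Real.arccos_le_pi _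
    have hcθ1 : Real.cos θ1 = 1 - δ/2 := Real.cos_arccos (by linarith) (by linarith)
    set C := ∫ θ in (0:ℝ)..θ1, Efn j 0 θ with hCdef
    have hCpos : 0 < C := Jpart_pos j 0 le_rfl hθ1pos hθ1pi
    have htend : Tendsto (fun κ : ℝ => (π / C) * Real.exp (-(κ * (δ/2)))) atTop (nhds 0) := by
      have h1 : Tendsto (fun κ : ℝ => -(κ * (δ/2))) atTop atBot := by
        apply Filter.tendsto_neg_atTop_atBot.comp
        exact Tendsto.atTop_mul_const (by linarith) tendsto_id
      have h2 := (Real.tendsto_exp_atBot.comp h1).const_mul (π / C)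
      simpa using h2
    have hev : ∀ᶠ κ in atTop, (π / C) * Real.exp (-(κ * (δ/2))) < δ :=
      htend.eventually_lt_const hδpos
    filter_upwards [hev, eventually_ge_atTop (0:ℝ)] with κ hκ1 hκ0
    have hJpos := Jfn_pos j κ
    have hII : ∀ (k : ℕ) (a b : ℝ), IntervalIntegrable (Efn k κ) MeasureTheory.volume a b :=
      fun k a b => (Efn_cont k κ).intervalIntegrable a b
    -- bound numerator piece on [0, θ0]
    have h2a : (∫ θ in (0:ℝ)..θ0, Efn (j+2) κ θ) ≤ 2*δ * Jfn j κ := by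
      have step1 : (∫ θ in (0:ℝ)..θ0, Efn (j+2) κ θ)
          ≤ ∫ θ in (0:ℝ)..θ0, 2*δ * Efn j κ θ := by
        apply intervalIntegral.integral_mono_on hθ0pos.le (hII _ _ _)
          ((continuous_const.mul (Efn_cont j κ)).intervalIntegrable _ _)
        intro θ hθ
        have hcos : 1 - δ ≤ Real.cos θ := by
          rw [← hcθ0]
          exact Real.cos_le_cos_of_nonneg_of_le_pi hθ.1 hθ0pi hθ.2
        have hsin0 : 0 ≤ Real.sin θ :=
          Real.sin_nonneg_of_nonneg_of_le_pi hθ.1 (le_trans hθ.2 hθ0pi)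
        have hsin2 : Real.sin θ ^ 2 ≤ 2*δ := by
          rw [Real.sin_sq]; nlinarith
        have hE : Efn (j+2) κ θ = Efn j κ θ * Real.sin θ ^ 2 := by
          unfold Efn; ring
        rw [hE]
        have hEnn : 0 ≤ Efn j κ θ := Efn_nonneg j κ hsin0
        show 2 * δ * Efn j κ θ ≥ _
        nlinarith
      have step2 : (∫ θ in (0:ℝ)..θ0, Efn j κ θ) ≤ Jfn j κ := by
        have hsplit : Jfn j κ = (∫ θ in (0:ℝ)..θ0, Efn j κ θ) + ∫ θ in θ0..π, Efn j κ θ :=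
          (intervalIntegral.integral_add_adjacent_intervals (hII j 0 θ0) (hII j θ0 π)).symm
        have : 0 ≤ ∫ θ in θ0..π, Efn j κ θ :=
          intervalIntegral.integral_nonneg hθ0pi (fun θ hθ =>
            Efn_nonneg j κ (Real.sin_nonneg_of_nonneg_of_le_pi (le_trans hθ0pos.le hθ.1) hθ.2))
        linarith
      rw [intervalIntegral.integral_const_mul] at step1
      nlinarith
    -- bound numerator piece on [θ0, π]
    have h2b : (∫ θ in θ0..π, Efn (j+2) κ θ) ≤ Real.exp (κ*(1-δ)) * π := by
      have step1 : (∫ θ in θ0..π, Efn (j+2) κ θ)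
          ≤ ∫ _θ in θ0..π, Real.exp (κ*(1-δ)) := by
        apply intervalIntegral.integral_mono_on hθ0pi (hII _ _ _)
          (intervalIntegrable_const)
        intro θ hθ
        have hcos : Real.cos θ ≤ 1 - δ := by
          rw [← hcθ0]
          exact Real.cos_le_cos_of_nonneg_of_le_pi hθ0pos.le hθ.2 hθ.1
        have hsin0 : 0 ≤ Real.sin θ :=
          Real.sin_nonneg_of_nonneg_of_le_pi (le_trans hθ0pos.le hθ.1) hθ.2
        have hpow : Real.sin θ ^ (j+2) ≤ 1 :=
          pow_le_one₀ hsin0 (Real.sin_le_one θ)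
        have hexp : Real.exp (κ * Real.cos θ) ≤ Real.exp (κ*(1-δ)) :=
          Real.exp_le_exp.2 (mul_le_mul_of_nonneg_left hcos hκ0)
        calc Efn (j+2) κ θ ≤ Real.exp (κ * Real.cos θ) * 1 := by
              unfold Efn
              exact mul_le_mul_of_nonneg_left hpow (Real.exp_nonneg _)
          _ ≤ Real.exp (κ*(1-δ)) := by rw [mul_one]; exact hexp
      rw [intervalIntegral.integral_const] at step1
      have : (π - θ0) • Real.exp (κ*(1-δ)) ≤ π * Real.exp (κ*(1-δ)) := by
        rw [smul_eq_mul]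
        exact mul_le_mul_of_nonneg_right (by linarith) (Real.exp_nonneg _)
      linarith [mul_comm π (Real.exp (κ*(1-δ)))]
    -- lower bound for denominator
    have h3 : Real.exp (κ*(1-δ/2)) * C ≤ Jfn j κ := by
      have step1 : (∫ θ in (0:ℝ)..θ1, Real.exp (κ*(1-δ/2)) * Efn j 0 θ)
          ≤ ∫ θ in (0:ℝ)..θ1, Efn j κ θ := by
        apply intervalIntegral.integral_mono_on hθ1pos.le
          ((continuous_const.mul (Efn_cont j 0)).intervalIntegrable _ _) (hII _ _ _)
        intro θ hθ
        have hcos : 1 - δ/2 ≤ Real.cos θ := by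
          rw [← hcθ1]
          exact Real.cos_le_cos_of_nonneg_of_le_pi hθ.1 hθ1pi hθ.2
        have hsin0 : 0 ≤ Real.sin θ :=
          Real.sin_nonneg_of_nonneg_of_le_pi hθ.1 (le_trans hθ.2 hθ1pi)
        have hE0 : Efn j 0 θ = Real.sin θ ^ j := by unfold Efn; simp
        show Real.exp (κ*(1-δ/2)) * Efn j 0 θ ≤ _
        rw [hE0]
        have : Real.exp (κ*(1-δ/2)) ≤ Real.exp (κ * Real.cos θ) :=
          Real.exp_le_exp.2 (mul_le_mul_of_nonneg_left hcos hκ0)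
        unfold Efn
        exact mul_le_mul_of_nonneg_right this (pow_nonneg hsin0 j)
      rw [intervalIntegral.integral_const_mul] at step1
      have hsplit : Jfn j κ = (∫ θ in (0:ℝ)..θ1, Efn j κ θ) + ∫ θ in θ1..π, Efn j κ θ :=
        (intervalIntegral.integral_add_adjacent_intervals (hII j 0 θ1) (hII j θ1 π)).symm
      have : 0 ≤ ∫ θ in θ1..π, Efn j κ θ :=
        intervalIntegral.integral_nonneg hθ1pi (fun θ hθ =>
          Efn_nonneg j κ (Real.sin_nonneg_of_nonneg_of_le_pi (le_trans hθ1pos.le hθ.1) hθ.2))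
      linarith
    -- combine
    have key : Jfn (j+2) κ ≤ 2*δ*(Jfn j κ) + Real.exp (κ*(1-δ)) * π := by
      have hsplit2 : Jfn (j+2) κ
          = (∫ θ in (0:ℝ)..θ0, Efn (j+2) κ θ) + ∫ θ in θ0..π, Efn (j+2) κ θ :=
        (intervalIntegral.integral_add_adjacent_intervals (hII (j+2) 0 θ0) (hII (j+2) θ0 π)).symm
      rw [hsplit2]; linarith
    have hcmp : Real.exp (κ*(1-δ)) * π ≤ (π/C) * Real.exp (-(κ*(δ/2))) * Jfn j κ := by
      have e1 : (π/C) * Real.exp (-(κ*(δ/2))) * (Real.exp (κ*(1-δ/2)) * C)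
          = Real.exp (κ*(1-δ)) * π := by
        rw [show Real.exp (κ*(1-δ)) = Real.exp (-(κ*(δ/2))) * Real.exp (κ*(1-δ/2)) by
          rw [← Real.exp_add]; ring_nf]
        field_simp
      calc Real.exp (κ*(1-δ)) * π
          = (π/C) * Real.exp (-(κ*(δ/2))) * (Real.exp (κ*(1-δ/2)) * C) := e1.symm
        _ ≤ (π/C) * Real.exp (-(κ*(δ/2))) * Jfn j κ := by
            apply mul_le_mul_of_nonneg_left h3
            positivity
    have hfinal : Jfn (j+2) κ / Jfn j κ ≤ 2*δ + (π/C) * Real.exp (-(κ*(δ/2))) := by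
      rw [div_le_iff₀ hJpos]
      nlinarith
    calc Jfn (j+2) κ / Jfn j κ ≤ 2*δ + (π/C) * Real.exp (-(κ*(δ/2))) := hfinal
      _ < 2*δ + δ := by linarith
      _ < ε := by linarith

/-- The function `σ̃(κ) = c(κ)/κ`, with
`c(κ) = (∫_0^π cosθ e^{κcosθ} sin^{n-2}θ dθ)/(∫_0^π e^{κcosθ} sin^{n-2}θ dθ)`,
extends continuously to `κ = 0` with value `1/n`, is strictly decreasing on `(0,∞)`,
and tends to `0` as `κ → ∞`. Consequently, for `σ ≥ 1/n` the equation `c(κ) = σκ`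
has the unique nonnegative solution `κ = 0`, while for `0 < σ < 1/n` it has exactly
one additional positive solution. -/
theorem stmt3 (n : ℕ) (hn : 2 ≤ n)
    (c : ℝ → ℝ)
    (hc : ∀ κ : ℝ, c κ =
      (∫ θ in (0:ℝ)..π, Real.cos θ * Real.exp (κ * Real.cos θ) * (Real.sin θ) ^ (n - 2)) /
      (∫ θ in (0:ℝ)..π, Real.exp (κ * Real.cos θ) * (Real.sin θ) ^ (n - 2)))
    (σt : ℝ → ℝ) (hσt : ∀ κ : ℝ, σt κ = c κ / κ) :
    Tendsto σt (nhdsWithin 0 (Set.Ioi 0)) (nhds (1 / (n : ℝ))) ∧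
    StrictAntiOn σt (Set.Ioi 0) ∧
    Tendsto σt atTop (nhds 0) ∧
    (∀ σ : ℝ, 1 / (n : ℝ) ≤ σ → {κ : ℝ | 0 ≤ κ ∧ c κ = σ * κ} = {0}) ∧
    (∀ σ : ℝ, 0 < σ → σ < 1 / (n : ℝ) →
      c 0 = σ * 0 ∧ ∃! κ : ℝ, 0 < κ ∧ c κ = σ * κ) := by
  set m := n - 2 with hmdef
  have hmn : (n:ℝ) = (m:ℝ) + 2 := by
    have h2 : n = m + 2 := by omega
    rw [h2]; push_cast; ring
  have hm1 : (0:ℝ) < (m:ℝ) + 1 := by positivity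
  set g : ℝ → ℝ := fun κ => Jfn (m+2) κ / (((m:ℝ)+1) * Jfn m κ) with hgdef
  have hg_cont : Continuous g := by
    apply (Jfn_cont (m+2)).div (continuous_const.mul (Jfn_cont m))
    exact fun κ => ne_of_gt (mul_pos hm1 (Jfn_pos m κ))
  have hg_pos : ∀ κ, 0 < g κ := fun κ =>
    div_pos (Jfn_pos _ _) (mul_pos hm1 (Jfn_pos m κ))
  have hg0 : g 0 = 1/(n:ℝ) := by
    have hrec := Jfn_zero_rec m
    have hJ := Jfn_pos m 0
    rw [hgdef]
    simp only
    rw [hrec, hmn]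
    field_simp
  have hga : StrictAntiOn g (Set.Ici 0) := by
    intro a ha b hb hab
    have hJm := Jmono m (Set.mem_Ici.1 ha) hab
    rw [hgdef]
    simp only
    rw [div_lt_div_iff₀ (mul_pos hm1 (Jfn_pos m b)) (mul_pos hm1 (Jfn_pos m a))]
    nlinarith
  have hdenom : ∀ κ : ℝ,
      (∫ θ in (0:ℝ)..π, Real.exp (κ * Real.cos θ) * Real.sin θ ^ m) = Jfn m κ :=
    fun κ => rfl
  have hceq : ∀ κ : ℝ, c κ = κ * g κ := by
    intro κ
    rw [hc κ, Bint m κ, hdenom, hgdef]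
    have hJ := (Jfn_pos m κ).ne'
    field_simp
  have hgtop : Tendsto g atTop (nhds 0) := by
    have h1 : ∀ κ : ℝ, g κ = (Jfn (m+2) κ / Jfn m κ) / ((m:ℝ)+1) := by
      intro κ
      rw [hgdef]
      simp only
      rw [div_div]
      ring_nf
    have h2 := (Jtop m).div_const ((m:ℝ)+1)
    rw [zero_div] at h2
    exact h2.congr (fun κ => (h1 κ).symm)
  have hσg : ∀ κ : ℝ, κ ≠ 0 → σt κ = g κ := by
    intro κ hκ
    rw [hσt κ, hceq κ, mul_comm κ (g κ), mul_div_assoc, div_self hκ, mul_one]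
  refine ⟨?_, ?_, ?_, ?_, ?_⟩
  · -- limit at 0+
    have h1 : Tendsto g (nhdsWithin 0 (Set.Ioi 0)) (nhds (1/(n:ℝ))) := by
      rw [← hg0]
      exact (hg_cont.tendsto 0).mono_left nhdsWithin_le_nhds
    apply h1.congr'
    filter_upwards [self_mem_nhdsWithin] with κ hκ
    exact (hσg κ (ne_of_gt hκ)).symm
  · -- strict anti
    intro a ha b hb hab
    rw [hσg a (ne_of_gt ha), hσg b (ne_of_gt hb)]
    exact hga (Set.mem_Ici.2 (le_of_lt ha)) (Set.mem_Ici.2 (le_of_lt hb)) hab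
  · -- limit at top
    apply hgtop.congr'
    filter_upwards [eventually_gt_atTop (0:ℝ)] with κ hκ
    exact (hσg κ (ne_of_gt hκ)).symm
  · -- σ ≥ 1/n
    intro σ hσ
    ext x
    simp only [Set.mem_setOf_eq, Set.mem_singleton_iff]
    constructor
    · rintro ⟨hx0, hx⟩
      by_contra hne
      have hxpos : 0 < x := lt_of_le_of_ne hx0 (Ne.symm hne)
      have hgx : g x = σ := by
        have hx' := hx
        rw [hceq x, mul_comm σ x] at hx'
        exact mul_left_cancel₀ (ne_of_gt hxpos) hx'
      have hlt : g x < g 0 := hga (Set.mem_Ici.2 (le_refl 0)) (Set.mem_Ici.2 (le_of_lt hxpos)) hxpos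
      rw [hg0, hgx] at hlt
      linarith
    · intro h
      subst h
      exact ⟨le_rfl, by rw [hceq 0]; ring⟩
  · -- 0 < σ < 1/n
    intro σ hσ1 hσ2
    refine ⟨by rw [hceq 0]; ring, ?_⟩
    have h0 : σ < g 0 := by rw [hg0]; exact hσ2
    obtain ⟨K, hK⟩ := ((hgtop.eventually_lt_const hσ1).and (eventually_ge_atTop (0:ℝ))).exists
    have hKσ : g K < σ := hK.1
    have hK0 : (0:ℝ) ≤ K := hK.2
    have hIVT := intermediate_value_Icc' hK0 hg_cont.continuousOn
    have hσmem : σ ∈ Set.Icc (g K) (g 0) := ⟨hKσ.le, h0.le⟩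
    obtain ⟨κ, hκmem, hκeq⟩ := hIVT hσmem
    have hκne : κ ≠ 0 := by
      intro h
      rw [h] at hκeq
      rw [hκeq] at h0
      exact lt_irrefl _ h0
    have hκpos : 0 < κ := lt_of_le_of_ne hκmem.1 (Ne.symm hκne)
    refine ⟨κ, ⟨hκpos, by rw [hceq κ, hκeq]; ring⟩, ?_⟩
    rintro y ⟨hy, hcy⟩
    have hgy : g y = σ := by
      rw [hceq y, mul_comm σ y] at hcy
      exact mul_left_cancel₀ (ne_of_gt hy) hcy
    apply hga.injOn (Set.mem_Ici.2 hy.le) (Set.mem_Ici.2 hκmem.1)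
    rw [hgy, hκeq]
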